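/- arXiv:2104.12773 — 2 statements merged into one kernel-verified Lean document; each statement's English description precedes it below -/
import Mathlib

section
/- Let (M, ḡ) be a compact Riemannian manifold without boundary, A a smooth function, Λ a real constant, and T a smooth function. If Λ − (1/(D−2)) e^{−(D−2)A} Δ̄(e^{(D−2)A}) = T pointwise, then Λ ∫_M e^{(D−2)A} dvol = ∫_M e^{(D−2)A} T dvol. In particular, if T ≤ 0 everywhere and T is not identically zero, then Λ < 0. -/
open MeasureTheory

/-- on a compact Riemannian manifold without boundary (abstracted by a
measure `vol` and gradient/divergence operators with `∫ Δ̄u dvol = 0` for smooth `u`),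
if `Λ − (1/(D−2)) e^{−(D−2)A} Δ̄(e^{(D−2)A}) = T` pointwise, then
`Λ ∫ e^{(D−2)A} dvol = ∫ e^{(D−2)A} T dvol`; in particular, if `T ≤ 0` everywhere and
`T` is not identically zero, then `Λ < 0`. -/
theorem integrated_external_equation
    {M : Type*} [MeasurableSpace M] [TopologicalSpace M] [OpensMeasurableSpace M]
    (vol : Measure M) [vol.IsOpenPosMeasure] [IsFiniteMeasure vol]
    {V : Type*} [NormedAddCommGroup V] [InnerProductSpace ℝ V]
    (smooth : (M → ℝ) → Prop)
    (grad : (M → ℝ) → M → V) (dvg : (M → V) → M → ℝ)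
    -- divergence theorem on the compact manifold without boundary
    (hdivthm : ∀ u : M → ℝ, smooth u → ∫ x, dvg (grad u) x ∂vol = 0)
    (D : ℕ) (hD : 2 < D) (A : M → ℝ) (hA : smooth A) (hAcont : Continuous A)
    (hexp : smooth fun y => Real.exp (((D : ℝ) - 2) * A y))
    (Λ : ℝ) (T : M → ℝ) (hT : Continuous T)
    (hint : Integrable (fun x => Real.exp (((D : ℝ) - 2) * A x) * T x) vol)
    (hint' : Integrable (fun x => Real.exp (((D : ℝ) - 2) * A x)) vol)
    (heq : ∀ x : M, Λ - (1 / ((D : ℝ) - 2)) * Real.exp (-(((D : ℝ) - 2) * A x))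
        * dvg (grad (fun y => Real.exp (((D : ℝ) - 2) * A y))) x = T x) :
    Λ * (∫ x, Real.exp (((D : ℝ) - 2) * A x) ∂vol)
        = ∫ x, Real.exp (((D : ℝ) - 2) * A x) * T x ∂vol
    ∧ ((∀ x, T x ≤ 0) → T ≠ 0 → Λ < 0) := by
  have hc0 : (0:ℝ) < (D : ℝ) - 2 := by
    have : (2:ℝ) < (D:ℝ) := by exact_mod_cast hD
    linarith
  set c : ℝ := (D : ℝ) - 2 with hc
  have hcne : c ≠ 0 := ne_of_gt hc0
  -- rewrite the divergence pointwise
  have hdvg : ∀ x, dvg (grad (fun y => Real.exp (c * A y))) x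
      = c * (Real.exp (c * A x) * (Λ - T x)) := by
    intro x
    have h := heq x
    have h1 : (1 / c) * Real.exp (-(c * A x))
        * dvg (grad (fun y => Real.exp (c * A y))) x = Λ - T x := by linarith
    have hexpne : Real.exp (c * A x) ≠ 0 := Real.exp_ne_zero _
    rw [Real.exp_neg] at h1
    field_simp at h1
    linarith
  have hzero : ∫ x, dvg (grad (fun y => Real.exp (c * A y))) x ∂vol = 0 :=
    hdivthm _ hexp
  have hrw : ∫ x, dvg (grad (fun y => Real.exp (c * A y))) x ∂vol
      = c * (Λ * (∫ x, Real.exp (c * A x) ∂vol)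
          - ∫ x, Real.exp (c * A x) * T x ∂vol) := by
    rw [show (fun x => dvg (grad (fun y => Real.exp (c * A y))) x)
        = fun x => c * (Λ * Real.exp (c * A x) - Real.exp (c * A x) * T x) from
      funext fun x => by rw [hdvg x]; ring]
    rw [integral_const_mul, integral_sub (hint'.const_mul Λ) hint, integral_const_mul]
  have hmain : Λ * (∫ x, Real.exp (c * A x) ∂vol)
      = ∫ x, Real.exp (c * A x) * T x ∂vol := by
    rw [hrw] at hzero
    rcases mul_eq_zero.mp hzero with h | h
    · exact absurd h hcne
    · linarith
  refine ⟨hmain, ?_⟩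
  intro hTle hTne
  obtain ⟨x0, hx0⟩ : ∃ x, T x ≠ 0 := by
    by_contra h
    push_neg at h
    exact hTne (funext fun x => h x)
  have hecont : Continuous fun x => Real.exp (c * A x) :=
    Real.continuous_exp.comp (continuous_const.mul hAcont)
  -- positivity of ∫ exp
  have hI1 : 0 < ∫ x, Real.exp (c * A x) ∂vol := by
    rw [integral_pos_iff_support_of_nonneg (fun x => (Real.exp_pos _).le) hint']
    have hs : (Function.support fun x => Real.exp (c * A x)) = Set.univ :=
      Set.eq_univ_of_forall fun x => (Real.exp_pos _).ne'
    rw [hs]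
    exact isOpen_univ.measure_pos vol ⟨x0, trivial⟩
  -- ∫ exp * T < 0
  have hnonneg : ∀ x, 0 ≤ -(Real.exp (c * A x) * T x) := fun x => by
    have := hTle x
    nlinarith [Real.exp_pos (c * A x)]
  have hI2le : ∫ x, Real.exp (c * A x) * T x ∂vol ≤ 0 := by
    have := integral_nonneg (μ := vol) (f := fun x => -(Real.exp (c * A x) * T x)) hnonneg
    rw [integral_neg] at this
    linarith
  have hI2ne : ∫ x, Real.exp (c * A x) * T x ∂vol ≠ 0 := by
    intro h
    have hg : ∫ x, -(Real.exp (c * A x) * T x) ∂vol = 0 := by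
      rw [integral_neg, h, neg_zero]
    have hgeq : (fun x => -(Real.exp (c * A x) * T x)) =ᵐ[vol] 0 :=
      (integral_eq_zero_iff_of_nonneg hnonneg hint.neg).mp hg
    have hgcont : Continuous fun x => -(Real.exp (c * A x) * T x) :=
      (hecont.mul hT).neg
    have heqfun : (fun x => -(Real.exp (c * A x) * T x)) = 0 :=
      (Continuous.ae_eq_iff_eq vol hgcont continuous_const).mp hgeq
    have := congrFun heqfun x0
    simp only [Pi.zero_apply, neg_eq_zero, mul_eq_zero] at this
    rcases this with h' | h'
    · exact Real.exp_ne_zero _ h'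
    · exact hx0 h'
  have hI2 : ∫ x, Real.exp (c * A x) * T x ∂vol < 0 := lt_of_le_of_ne hI2le hI2ne
  nlinarith
end

section
/- Let V be an n-dimensional real inner product space and F a k-form on V decomposed as contributions f_i and (in an orthogonal complement construction) f_e. Then the tensor f_i)_m·(f_i)_n − (f_e)_m·(f_e)_n + g_{mn} f_e² equals (f_i)_m·(f_i)_n + (⋆f_e)_m·(⋆f_e)_n and is therefore positive semidefinite. -/
open scoped BigOperators
open Equiv Function

noncomputable def leviCivita {n : ℕ} (σ : Fin n → Fin n) : ℝ :=
  if h : Function.Bijective σ then ((Equiv.Perm.sign (Equiv.ofBijective σ h) : ℤ) : ℝ) else 0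

def IsAlt {n k : ℕ} (F : (Fin k → Fin n) → ℝ) : Prop :=
  ∀ (τ : Equiv.Perm (Fin k)) (m : Fin k → Fin n),
    F (m ∘ τ) = ((Equiv.Perm.sign τ : ℤ) : ℝ) * F m

noncomputable def formSq {n k : ℕ} (F : (Fin k → Fin n) → ℝ) : ℝ :=
  (1 / (Nat.factorial k : ℝ)) * ∑ m : Fin k → Fin n, F m * F m

noncomputable def hodgeStar {n k : ℕ} (h : k ≤ n) (F : (Fin k → Fin n) → ℝ) :
    (Fin (n - k) → Fin n) → ℝ :=
  fun q => (1 / (Nat.factorial k : ℝ)) *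
    ∑ m : Fin k → Fin n,
      leviCivita (Fin.append m q ∘ Fin.cast (Nat.add_sub_cancel' h).symm) * F m

noncomputable def formDot {n : ℕ} : {k : ℕ} → ((Fin k → Fin n) → ℝ) → Fin n → Fin n → ℝ
  | 0, _, _, _ => 0
  | (j + 1), F, m, m' => (1 / (Nat.factorial j : ℝ)) *
      ∑ p : Fin j → Fin n, F (Fin.cons m p) * F (Fin.cons m' p)


lemma leviCivita_of_not_bij {n : ℕ} {f : Fin n → Fin n} (h : ¬ Function.Bijective f) :
    leviCivita f = 0 := dif_neg h

lemma leviCivita_comp_perm {n : ℕ} (f : Fin n → Fin n) (e : Equiv.Perm (Fin n)) :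
    leviCivita (f ∘ e) = leviCivita f * ((Equiv.Perm.sign e : ℤ) : ℝ) := by
  by_cases hf : Function.Bijective f
  · have hfe : Function.Bijective (f ∘ e) := hf.comp e.bijective
    have key : Equiv.ofBijective (f ∘ e) hfe = (Equiv.ofBijective f hf) * e := by
      ext x; rfl
    rw [leviCivita, dif_pos hfe, key, leviCivita, dif_pos hf, map_mul]
    push_cast
    ring
  · have hfe : ¬ Function.Bijective (f ∘ e) := by
      intro hc
      have : f = (f ∘ e) ∘ e.symm := by funext x; simp
      rw [this] at hf
      exact hf (hc.comp e.symm.bijective)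
    rw [leviCivita_of_not_bij hf, leviCivita_of_not_bij hfe, zero_mul]

lemma leviCivita_mul_self {n : ℕ} (f : Fin n → Fin n) :
    leviCivita f * leviCivita f = if Function.Bijective f then 1 else 0 := by
  by_cases hf : Function.Bijective f
  · rw [if_pos hf, leviCivita, dif_pos hf, ← Int.cast_mul, ← Units.val_mul, Int.units_mul_self, Units.val_one, Int.cast_one]
  · rw [if_neg hf, leviCivita_of_not_bij hf, mul_zero]

lemma IsAlt.eq_zero_of_not_inj {n k : ℕ} {F : (Fin k → Fin n) → ℝ} (hF : IsAlt F)
    {p : Fin k → Fin n} (hp : ¬ Function.Injective p) : F p = 0 := by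
  simp only [Function.Injective, not_forall] at hp
  obtain ⟨i, i', hval, hne⟩ := hp
  have hps : p ∘ (Equiv.swap i i') = p := by
    funext x
    rcases eq_or_ne x i with rfl | hxi
    · simp [Equiv.swap_apply_left, hval]
    rcases eq_or_ne x i' with rfl | hxi'
    · simp [Equiv.swap_apply_right, hval]
    · simp [Equiv.swap_apply_of_ne_of_ne hxi hxi']
  have := hF (Equiv.swap i i') p
  rw [hps, Equiv.Perm.sign_swap hne] at this
  push_cast at this
  linarith

/-- The permutation of `Fin n` acting on the first block of an `(t,u)` split. -/
noncomputable def blockPerm {t u n : ℕ} (hn : t + u = n) (σ : Equiv.Perm (Fin t)) :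
    Equiv.Perm (Fin n) :=
  (finCongr hn).permCongr
    (finSumFinEquiv.permCongr (Equiv.sumCongr σ (Equiv.refl (Fin u))))

lemma sign_blockPerm {t u n : ℕ} (hn : t + u = n) (σ : Equiv.Perm (Fin t)) :
    Equiv.Perm.sign (blockPerm hn σ) = Equiv.Perm.sign σ := by
  simp [blockPerm, Equiv.Perm.sign_permCongr, Equiv.Perm.sign_sumCongr]

lemma append_comp_fapp {t u n : ℕ} (a : Fin t → Fin n) (r : Fin u → Fin n)
    (σ : Equiv.Perm (Fin t)) (y : Fin (t + u)) :
    Fin.append a r (finSumFinEquiv.permCongr (Equiv.sumCongr σ (Equiv.refl (Fin u))) y)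
      = Fin.append (a ∘ σ) r y := by
  obtain ⟨s, rfl⟩ := finSumFinEquiv.surjective y
  rcases s with i | i <;>
    simp [Equiv.permCongr_apply, finSumFinEquiv_apply_left, finSumFinEquiv_apply_right,
      Fin.append_left, Fin.append_right]

lemma cast_blockPerm {t u n : ℕ} (hn : t + u = n) (σ : Equiv.Perm (Fin t)) (x : Fin n) :
    Fin.cast hn.symm (blockPerm hn σ x)
      = finSumFinEquiv.permCongr (Equiv.sumCongr σ (Equiv.refl (Fin u))) (Fin.cast hn.symm x) := by
  simp [blockPerm, Equiv.permCongr_apply, finCongr_apply, Fin.ext_iff]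

lemma leviCivita_append_comp {t u n : ℕ} (hn : t + u = n) (a : Fin t → Fin n)
    (r : Fin u → Fin n) (σ : Equiv.Perm (Fin t)) :
    leviCivita (fun x => Fin.append (a ∘ σ) r (Fin.cast hn.symm x))
      = leviCivita (fun x => Fin.append a r (Fin.cast hn.symm x)) * ((Equiv.Perm.sign σ : ℤ) : ℝ) := by
  have key : (fun x => Fin.append (a ∘ σ) r (Fin.cast hn.symm x))
      = (fun x => Fin.append a r (Fin.cast hn.symm x)) ∘ (blockPerm hn σ) := by
    funext x
    simp only [comp_apply, cast_blockPerm, append_comp_fapp]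
  rw [key, leviCivita_comp_perm, sign_blockPerm]

noncomputable def bijSubtypeEquiv (α β : Type*) : {f : α → β // Function.Bijective f} ≃ (α ≃ β) where
  toFun f := Equiv.ofBijective f.1 f.2
  invFun e := ⟨e, e.bijective⟩
  left_inv f := Subtype.ext rfl
  right_inv e := Equiv.ext fun _ => rfl

lemma append_eq_elim {t u n : ℕ} (a : Fin t → Fin n) (r : Fin u → Fin n) (y : Fin (t + u)) :
    Fin.append a r y = Sum.elim a r (finSumFinEquiv.symm y) := by
  obtain ⟨s, rfl⟩ := finSumFinEquiv.surjective y
  rcases s with i | i <;>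
    simp [finSumFinEquiv_apply_left, finSumFinEquiv_apply_right, Fin.append_left, Fin.append_right]

lemma bij_append_iff {t u n : ℕ} (hn : t + u = n) (a : Fin t → Fin n) (r : Fin u → Fin n) :
    Function.Bijective (fun x => Fin.append a r (Fin.cast hn.symm x))
      ↔ Function.Bijective (Sum.elim a r) := by
  have key : (fun x => Fin.append a r (Fin.cast hn.symm x))
      = (Sum.elim a r) ∘ ((finCongr hn.symm).trans finSumFinEquiv.symm) := by
    funext x
    simp [append_eq_elim, finCongr_apply]
  rw [key]
  exact Equiv.bijective_comp _ _

noncomputable def elimBijEquiv {t u n : ℕ} (a : Fin t → Fin n) (ha : Function.Injective a) :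
    {r : Fin u → Fin n // Function.Bijective (Sum.elim a r)} ≃ (Fin u ≃ ↥(Set.range a)ᶜ) where
  toFun r := Equiv.ofBijective (fun i => (⟨r.1 i, by
      simp only [Set.mem_compl_iff, Set.mem_range, not_exists]
      intro j hj
      exact absurd (r.2.injective
        (show Sum.elim a r.1 (Sum.inl j) = Sum.elim a r.1 (Sum.inr i) from hj)) (by simp)⟩ :
      ↥(Set.range a)ᶜ))
    (by
      constructor
      · intro i i' h
        have h2 : Sum.elim a r.1 (Sum.inr i) = Sum.elim a r.1 (Sum.inr i') := by
          simpa using congrArg Subtype.val h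
        simpa using r.2.injective h2
      · rintro ⟨y, hy⟩
        obtain ⟨s, hs⟩ := r.2.surjective y
        rcases s with j | i
        · exact absurd (⟨j, hs⟩ : y ∈ Set.range a) hy
        · exact ⟨i, Subtype.ext hs⟩)
  invFun e := ⟨fun i => (e i : Fin n), by
    constructor
    · rintro (j | i) (j' | i') h <;> simp only [Sum.elim_inl, Sum.elim_inr] at h
      · exact congrArg Sum.inl (ha h)
      · exact absurd ⟨j, h⟩ (e i').2
      · exact absurd ⟨j', h.symm⟩ (e i).2
      · exact congrArg Sum.inr (e.injective (Subtype.ext h))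
    · intro y
      by_cases hy : y ∈ Set.range a
      · obtain ⟨j, hj⟩ := hy
        exact ⟨Sum.inl j, hj⟩
      · obtain ⟨i, hi⟩ := e.surjective ⟨y, hy⟩
        exact ⟨Sum.inr i, congrArg Subtype.val hi⟩⟩
  left_inv r := Subtype.ext (funext fun i => rfl)
  right_inv e := Equiv.ext fun i => Subtype.ext rfl

lemma count_bij {t u n : ℕ} (hn : t + u = n) (a : Fin t → Fin n) (ha : Function.Injective a) :
    ∑ r : Fin u → Fin n,
      (if Function.Bijective (fun x => Fin.append a r (Fin.cast hn.symm x)) then (1:ℝ) else 0)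
      = (Nat.factorial u : ℝ) := by
  classical
  simp only [bij_append_iff hn a]
  rw [Finset.sum_boole]
  have hcard : Fintype.card ↥(Set.range a)ᶜ = u := by
    simp only [Fintype.card_compl_set, Set.card_range_of_injective ha, Fintype.card_fin]
    omega
  have e0 : Fin u ≃ ↥(Set.range a)ᶜ := Fintype.equivOfCardEq (by rw [hcard, Fintype.card_fin])
  have : (Finset.univ.filter fun r : Fin u → Fin n => Function.Bijective (Sum.elim a r)).card
      = Fintype.card {r : Fin u → Fin n // Function.Bijective (Sum.elim a r)} :=
    (Fintype.card_subtype _).symm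
  rw [this, Fintype.card_congr (elimBijEquiv a ha), Fintype.card_equiv e0, Fintype.card_fin]

lemma levi_append_zero_left {t u n : ℕ} (hn : t + u = n) {a : Fin t → Fin n}
    (ha : ¬ Function.Injective a) (r : Fin u → Fin n) :
    leviCivita (fun x => Fin.append a r (Fin.cast hn.symm x)) = 0 := by
  apply leviCivita_of_not_bij
  intro hb
  apply ha
  intro i i' h
  have := ((bij_append_iff hn a r).mp hb).injective
    (show Sum.elim a r (Sum.inl i) = Sum.elim a r (Sum.inl i') from h)
  exact Sum.inl.inj this

lemma perm_delta_sum_zero_left {t n : ℕ} {a b : Fin t → Fin n}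
    (ha : ¬ Function.Injective a) :
    ∑ τ : Equiv.Perm (Fin t), ((Equiv.Perm.sign τ : ℤ) : ℝ) *
      ∏ i, (if a i = b (τ i) then (1:ℝ) else 0) = 0 := by
  simp only [Function.Injective, not_forall] at ha
  obtain ⟨i₁, i₂, hval, hne⟩ := ha
  have has : ∀ i, a (Equiv.swap i₁ i₂ i) = a i := by
    intro i
    rcases eq_or_ne i i₁ with rfl | h1
    · simp [Equiv.swap_apply_left, hval]
    rcases eq_or_ne i i₂ with rfl | h2
    · simp [Equiv.swap_apply_right, hval]
    · simp [Equiv.swap_apply_of_ne_of_ne h1 h2]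
  apply Finset.sum_ninvolution (fun τ => τ * Equiv.swap i₁ i₂)
  · intro τ
    have hsign : ((Equiv.Perm.sign (τ * Equiv.swap i₁ i₂) : ℤ) : ℝ)
        = -((Equiv.Perm.sign τ : ℤ) : ℝ) := by
      rw [map_mul, Equiv.Perm.sign_swap hne]
      push_cast
      ring
    have hprod : ∏ i, (if a i = b ((τ * Equiv.swap i₁ i₂) i) then (1:ℝ) else 0)
        = ∏ i, (if a i = b (τ i) then (1:ℝ) else 0) := by
      have step : ∀ i, (if a i = b ((τ * Equiv.swap i₁ i₂) i) then (1:ℝ) else 0)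
          = (fun i => if a (Equiv.swap i₁ i₂ i) = b (τ i) then (1:ℝ) else 0)
            (Equiv.swap i₁ i₂ i) := by
        intro i
        simp [Equiv.Perm.mul_apply, Equiv.swap_apply_self, has]
        exact if_congr Iff.rfl rfl rfl
      rw [Finset.prod_congr rfl fun i _ => step i,
        Equiv.prod_comp (Equiv.swap i₁ i₂)
          (fun i => if a ((Equiv.swap i₁ i₂) i) = b (τ i) then (1:ℝ) else 0)]
      exact Finset.prod_congr rfl fun i _ => by rw [has]
    rw [hsign, hprod]
    ring
  · intro τ hτ hc
    have h1 : Equiv.swap i₁ i₂ = 1 := mul_left_cancel (a := τ) (by rw [hc, mul_one])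
    exact hne (by simpa using (congrFun (congrArg (fun e : Equiv.Perm (Fin t) => (e : Fin t → Fin t)) h1) i₁).symm)
  · intro τ; exact Finset.mem_univ _
  · intro τ
    rw [mul_assoc, Equiv.swap_mul_self, mul_one]

lemma levi_contraction {t u n : ℕ} (hn : t + u = n) (a b : Fin t → Fin n) :
    ∑ r : Fin u → Fin n,
      leviCivita (fun x => Fin.append a r (Fin.cast hn.symm x)) *
        leviCivita (fun x => Fin.append b r (Fin.cast hn.symm x))
    = (Nat.factorial u : ℝ) *
      ∑ τ : Equiv.Perm (Fin t), ((Equiv.Perm.sign τ : ℤ) : ℝ) *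
        ∏ i, (if a i = b (τ i) then (1:ℝ) else 0) := by
  classical
  by_cases ha : Function.Injective a
  · by_cases hex : ∃ τ : Equiv.Perm (Fin t), a = b ∘ τ
    · obtain ⟨τ₀, hτ₀⟩ := hex
      have hb : Function.Injective b := by
        intro i i' h
        have : a (τ₀.symm i) = a (τ₀.symm i') := by
          rw [hτ₀]; simpa using h
        simpa using ha this
      have hba : b = a ∘ ⇑(τ₀⁻¹) := by
        funext x
        have h2 : a (τ₀⁻¹ x) = b (τ₀ (τ₀⁻¹ x)) := congrFun hτ₀ (τ₀⁻¹ x)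
        simpa using h2.symm
      -- RHS
      have hRHS : ∑ τ : Equiv.Perm (Fin t), ((Equiv.Perm.sign τ : ℤ) : ℝ) *
          ∏ i, (if a i = b (τ i) then (1:ℝ) else 0) = ((Equiv.Perm.sign τ₀ : ℤ) : ℝ) := by
        rw [Finset.sum_eq_single τ₀]
        · have : ∀ i, (if a i = b (τ₀ i) then (1:ℝ) else 0) = 1 := fun i =>
            if_pos (congrFun hτ₀ i)
          rw [Finset.prod_congr rfl fun i _ => this i, Finset.prod_const_one, mul_one]
        · intro τ _ hτ
          have : ∃ i, a i ≠ b (τ i) := by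
            by_contra hco
            push_neg at hco
            apply hτ
            apply Equiv.ext
            intro i
            exact hb ((hco i).symm.trans (congrFun hτ₀ i))
          obtain ⟨i, hi⟩ := this
          rw [Finset.prod_eq_zero (Finset.mem_univ i)
            (if_neg hi : (if a i = b (τ i) then (1:ℝ) else 0) = 0), mul_zero]
        · intro hc; exact absurd (Finset.mem_univ τ₀) hc
      rw [hRHS]
      -- LHS
      have hterm : ∀ r : Fin u → Fin n,
          leviCivita (fun x => Fin.append a r (Fin.cast hn.symm x)) *
            leviCivita (fun x => Fin.append b r (Fin.cast hn.symm x))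
          = ((Equiv.Perm.sign τ₀ : ℤ) : ℝ) *
            (if Function.Bijective (fun x => Fin.append a r (Fin.cast hn.symm x))
              then (1:ℝ) else 0) := by
        intro r
        have : leviCivita (fun x => Fin.append b r (Fin.cast hn.symm x))
            = leviCivita (fun x => Fin.append a r (Fin.cast hn.symm x)) *
              ((Equiv.Perm.sign τ₀⁻¹ : ℤ) : ℝ) := by
          rw [← leviCivita_append_comp hn a r τ₀⁻¹, ← hba]
        rw [this, Equiv.Perm.sign_inv]
        rw [show ∀ x y z : ℝ, x * (y * z) = z * (x * y) from fun x y z => by ring,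
          leviCivita_mul_self]
      rw [Finset.sum_congr rfl fun r _ => hterm r, ← Finset.mul_sum, count_bij hn a ha]
      ring
    · -- no permutation matches : both sides vanish
      have hRHS : ∑ τ : Equiv.Perm (Fin t), ((Equiv.Perm.sign τ : ℤ) : ℝ) *
          ∏ i, (if a i = b (τ i) then (1:ℝ) else 0) = 0 := by
        apply Finset.sum_eq_zero
        intro τ _
        have : ∃ i, a i ≠ b (τ i) := by
          by_contra hco
          push_neg at hco
          exact hex ⟨τ, funext fun i => hco i⟩
        obtain ⟨i, hi⟩ := this
        rw [Finset.prod_eq_zero (Finset.mem_univ i)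
          (if_neg hi : (if a i = b (τ i) then (1:ℝ) else 0) = 0), mul_zero]
      rw [hRHS, mul_zero]
      apply Finset.sum_eq_zero
      intro r _
      by_cases hba : Function.Bijective (fun x => Fin.append a r (Fin.cast hn.symm x))
      · by_cases hbb : Function.Bijective (fun x => Fin.append b r (Fin.cast hn.symm x))
        · exfalso
          have hea := (bij_append_iff hn a r).mp hba
          have heb := (bij_append_iff hn b r).mp hbb
          have hbinj : Function.Injective b := fun i i' h =>
            Sum.inl.inj (heb.injective
              (show Sum.elim b r (Sum.inl i) = Sum.elim b r (Sum.inl i') from h))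
          have hrange : Set.range a = Set.range b := by
            have key : ∀ (c : Fin t → Fin n), Function.Bijective (Sum.elim c r) →
                Set.range c = (Set.range r)ᶜ := by
              intro c hc
              ext x
              constructor
              · rintro ⟨i, rfl⟩ ⟨w, hw⟩
                exact absurd (hc.injective
                  (show Sum.elim c r (Sum.inr w) = Sum.elim c r (Sum.inl i) from hw)) (by simp)
              · intro hx
                obtain ⟨s, hs⟩ := hc.surjective x
                rcases s with i | w
                · exact ⟨i, hs⟩
                · exact absurd ⟨w, hs⟩ hx
            rw [key a hea, key b heb]
          apply hex
          refine ⟨(Equiv.ofInjective a ha).trans ((Equiv.setCongr hrange).trans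
            (Equiv.ofInjective b hbinj).symm), funext fun i => ?_⟩
          simp only [Function.comp_apply, Equiv.trans_apply, Equiv.setCongr_apply]
          rw [Equiv.apply_ofInjective_symm hbinj]
          rfl
        · rw [leviCivita_of_not_bij hbb, mul_zero]
      · rw [leviCivita_of_not_bij hba, zero_mul]
  · rw [perm_delta_sum_zero_left ha, mul_zero]
    exact Finset.sum_eq_zero fun r _ => by rw [levi_append_zero_left hn ha r, zero_mul]

lemma formDot_zero_eq {n k : ℕ} (hk : k = 0) (F : (Fin k → Fin n) → ℝ) (m m' : Fin n) :
    formDot F m m' = 0 := by subst hk; rfl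

lemma formDot_succ_eq {n k u : ℕ} (hk : k = u + 1) (F : (Fin k → Fin n) → ℝ) (m m' : Fin n) :
    formDot F m m' = (1 / (Nat.factorial u : ℝ)) *
      ∑ p : Fin u → Fin n,
        F (Fin.cons m p ∘ Fin.cast hk) * F (Fin.cons m' p ∘ Fin.cast hk) := by
  subst hk
  simp only [formDot, Fin.cast_refl, Function.comp_id]

lemma sum_delta_prod {n j : ℕ} (g : (Fin j → Fin n) → ℝ) (c : Fin j → Fin n) :
    ∑ q : Fin j → Fin n, g q * ∏ w, (if c w = q w then (1:ℝ) else 0) = g c := by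
  classical
  rw [Finset.sum_eq_single c]
  · simp
  · intro q _ hq
    have : ∃ w, c w ≠ q w := by
      by_contra hco
      push_neg at hco
      exact hq (funext fun w => (hco w).symm)
    obtain ⟨w, hw⟩ := this
    rw [Finset.prod_eq_zero (Finset.mem_univ w)
      (if_neg hw : (if c w = q w then (1:ℝ) else 0) = 0), mul_zero]
  · intro hc; exact absurd (Finset.mem_univ c) hc

lemma sign_real_mul_self {α : Type*} [DecidableEq α] [Fintype α] (σ : Equiv.Perm α) :
    ((Equiv.Perm.sign σ : ℤ) : ℝ) * ((Equiv.Perm.sign σ : ℤ) : ℝ) = 1 := by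
  rw [← Int.cast_mul, ← Units.val_mul, Int.units_mul_self, Units.val_one, Int.cast_one]

lemma tau_sum_core {n j : ℕ} (fe : (Fin j → Fin n) → ℝ) (hfe : IsAlt fe) (m m' : Fin n) :
    ∑ q : Fin j → Fin n, ∑ q' : Fin j → Fin n, fe q * fe q' *
      ∑ τ : Equiv.Perm (Fin (j+1)), ((Equiv.Perm.sign τ : ℤ):ℝ) *
        ∏ i : Fin (j+1), (if (Fin.cons m q : Fin (j+1) → Fin n) i = (Fin.cons m' q' : Fin (j+1) → Fin n) (τ i) then (1:ℝ) else 0)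
    = (Nat.factorial j : ℝ) * ((if m = m' then (1:ℝ) else 0) * (∑ q : Fin j → Fin n, fe q * fe q)
        - ∑ l : Fin j, ∑ q : Fin j → Fin n,
            (if q l = m' then (1:ℝ) else 0) * (fe q * fe (Function.update q l m))) := by
  classical
  have step1 : ∀ (q q' : Fin j → Fin n) (τ : Equiv.Perm (Fin (j+1))),
      ∏ i : Fin (j+1), (if (Fin.cons m q : Fin (j+1) → Fin n) i = (Fin.cons m' q' : Fin (j+1) → Fin n) (τ i) then (1:ℝ) else 0)
      = (if (Fin.cons m q : Fin (j+1) → Fin n) (τ⁻¹ 0) = m' then (1:ℝ) else 0) *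
        ∏ w, (if (Fin.cons m q : Fin (j+1) → Fin n) (τ⁻¹ (Fin.succ w)) = q' w then (1:ℝ) else 0) := by
    intro q q' τ
    have h1 : ∏ i : Fin (j+1), (if (Fin.cons m q : Fin (j+1) → Fin n) i = (Fin.cons m' q' : Fin (j+1) → Fin n) (τ i) then (1:ℝ) else 0)
        = ∏ i : Fin (j+1), (if (Fin.cons m q : Fin (j+1) → Fin n) (τ⁻¹ i) = (Fin.cons m' q' : Fin (j+1) → Fin n) i then (1:ℝ) else 0) := by
      exact Fintype.prod_equiv τ _ _ fun x => by simp
    rw [h1, Fin.prod_univ_succ, Fin.cons_zero]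
    exact congrArg _ (Finset.prod_congr rfl fun w _ => by rw [Fin.cons_succ])
  -- define G
  set G : (Fin j → Fin n) → Equiv.Perm (Fin (j+1)) → ℝ := fun q τ =>
    fe q * ((Equiv.Perm.sign τ : ℤ):ℝ) * (if (Fin.cons m q : Fin (j+1) → Fin n) (τ 0) = m' then (1:ℝ) else 0) *
      fe (fun w => (Fin.cons m q : Fin (j+1) → Fin n) (τ (Fin.succ w))) with hG
  have step2 : ∀ q : Fin j → Fin n,
      ∑ q' : Fin j → Fin n, fe q * fe q' *
        ∑ τ : Equiv.Perm (Fin (j+1)), ((Equiv.Perm.sign τ : ℤ):ℝ) *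
          ∏ i : Fin (j+1), (if (Fin.cons m q : Fin (j+1) → Fin n) i = (Fin.cons m' q' : Fin (j+1) → Fin n) (τ i) then (1:ℝ) else 0)
      = ∑ τ : Equiv.Perm (Fin (j+1)), G q τ⁻¹ := by
    intro q
    have swap1 : ∑ q' : Fin j → Fin n, fe q * fe q' *
        ∑ τ : Equiv.Perm (Fin (j+1)), ((Equiv.Perm.sign τ : ℤ):ℝ) *
          ∏ i : Fin (j+1), (if (Fin.cons m q : Fin (j+1) → Fin n) i = (Fin.cons m' q' : Fin (j+1) → Fin n) (τ i) then (1:ℝ) else 0)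
        = ∑ τ : Equiv.Perm (Fin (j+1)), ∑ q' : Fin j → Fin n,
            fe q * fe q' * (((Equiv.Perm.sign τ : ℤ):ℝ) *
              ∏ i : Fin (j+1), (if (Fin.cons m q : Fin (j+1) → Fin n) i = (Fin.cons m' q' : Fin (j+1) → Fin n) (τ i) then (1:ℝ) else 0)) := by
      rw [Finset.sum_comm]
      exact Finset.sum_congr rfl fun q' _ => by rw [Finset.mul_sum]
    rw [swap1]
    refine Finset.sum_congr rfl fun τ _ => ?_
    have inner : ∑ q' : Fin j → Fin n,
        fe q * fe q' * (((Equiv.Perm.sign τ : ℤ):ℝ) *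
          ∏ i : Fin (j+1), (if (Fin.cons m q : Fin (j+1) → Fin n) i = (Fin.cons m' q' : Fin (j+1) → Fin n) (τ i) then (1:ℝ) else 0))
        = fe q * ((Equiv.Perm.sign τ : ℤ):ℝ) *
            (if (Fin.cons m q : Fin (j+1) → Fin n) (τ⁻¹ 0) = m' then (1:ℝ) else 0) *
            ∑ q' : Fin j → Fin n, fe q' *
              ∏ w, (if (Fin.cons m q : Fin (j+1) → Fin n) (τ⁻¹ (Fin.succ w)) = q' w then (1:ℝ) else 0) := by
      rw [Finset.mul_sum]
      refine Finset.sum_congr rfl fun q' _ => ?_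
      rw [step1 q q' τ]
      ring
    rw [inner, sum_delta_prod (fun q' => fe q') (fun w => (Fin.cons m q : Fin (j+1) → Fin n) (τ⁻¹ (Fin.succ w)))]
    rw [hG]
    simp only [Equiv.Perm.sign_inv]
  rw [Finset.sum_congr rfl fun q _ => step2 q]
  have step3 : ∀ q : Fin j → Fin n,
      ∑ τ : Equiv.Perm (Fin (j+1)), G q τ⁻¹ = ∑ τ : Equiv.Perm (Fin (j+1)), G q τ := by
    intro q
    exact Fintype.sum_equiv (Equiv.inv (Equiv.Perm (Fin (j+1)))) _ _ fun τ => rfl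
  rw [Finset.sum_congr rfl fun q _ => step3 q]
  have step4 : ∀ q : Fin j → Fin n,
      ∑ τ : Equiv.Perm (Fin (j+1)), G q τ
      = ∑ c : Fin (j+1), ∑ σ : Equiv.Perm (Fin j),
          G q (Equiv.Perm.decomposeFin.symm (c, σ)) := by
    intro q
    rw [Fintype.sum_equiv Equiv.Perm.decomposeFin (fun τ => G q τ)
      (fun p => G q (Equiv.Perm.decomposeFin.symm p)) (fun τ => by simp),
      Fintype.sum_prod_type]
  rw [Finset.sum_congr rfl fun q _ => step4 q]
  -- evaluate the two kinds of terms
  have zeroterm : ∀ q : Fin j → Fin n, ∀ σ : Equiv.Perm (Fin j),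
      G q (Equiv.Perm.decomposeFin.symm (0, σ))
      = (if m = m' then (1:ℝ) else 0) * (fe q * fe q) := by
    intro q σ
    simp only [hG, Equiv.Perm.decomposeFin_symm_apply_zero,
      Equiv.Perm.decomposeFin_symm_apply_succ, Equiv.swap_self,
      Equiv.Perm.decomposeFin.symm_sign, if_pos rfl, one_mul, Fin.cons_zero,
      Equiv.refl_apply, Fin.cons_succ]
    have h2 : fe (fun w => q (σ w)) = ((Equiv.Perm.sign σ : ℤ):ℝ) * fe q := hfe σ q
    rw [h2]
    have h3 := sign_real_mul_self σ
    simp only [eq_self_iff_true, if_true, one_mul]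
    linear_combination ((if m = m' then (1:ℝ) else 0) * (fe q * fe q)) * h3
  have succterm : ∀ q : Fin j → Fin n, ∀ l : Fin j, ∀ σ : Equiv.Perm (Fin j),
      G q (Equiv.Perm.decomposeFin.symm (Fin.succ l, σ))
      = -((if q l = m' then (1:ℝ) else 0) * (fe q * fe (Function.update q l m))) := by
    intro q l σ
    simp only [hG]
    have htuple : (fun w => (Fin.cons m q : Fin (j+1) → Fin n) (Equiv.Perm.decomposeFin.symm (Fin.succ l, σ)
        (Fin.succ w))) = (Function.update q l m) ∘ σ := by
      funext w
      rw [Equiv.Perm.decomposeFin_symm_apply_succ]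
      rcases eq_or_ne (σ w) l with hv | hv
      · rw [hv, Equiv.swap_apply_right, Fin.cons_zero, Function.comp_apply, hv,
          Function.update_self]
      · rw [Equiv.swap_apply_of_ne_of_ne (Fin.succ_ne_zero _)
          (fun hc => hv (Fin.succ_injective _ hc)), Fin.cons_succ, Function.comp_apply,
          Function.update_of_ne hv]
    rw [htuple, hfe σ (Function.update q l m)]
    rw [Equiv.Perm.decomposeFin_symm_apply_zero, Fin.cons_succ,
      Equiv.Perm.decomposeFin.symm_sign, if_neg (Fin.succ_ne_zero l)]
    have h3 := sign_real_mul_self σ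
    push_cast
    linear_combination -((if q l = m' then (1:ℝ) else 0) * (fe q * fe (Function.update q l m))) * h3
  -- put it together
  have split : ∀ q : Fin j → Fin n,
      ∑ c : Fin (j+1), ∑ σ : Equiv.Perm (Fin j),
        G q (Equiv.Perm.decomposeFin.symm (c, σ))
      = (Nat.factorial j : ℝ) * ((if m = m' then (1:ℝ) else 0) * (fe q * fe q))
        - (Nat.factorial j : ℝ) * ∑ l : Fin j,
            ((if q l = m' then (1:ℝ) else 0) * (fe q * fe (Function.update q l m))) := by
    intro q
    rw [Fin.sum_univ_succ]
    have h0 : ∑ σ : Equiv.Perm (Fin j), G q (Equiv.Perm.decomposeFin.symm (0, σ))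
        = (Nat.factorial j : ℝ) * ((if m = m' then (1:ℝ) else 0) * (fe q * fe q)) := by
      rw [Finset.sum_congr rfl fun σ _ => zeroterm q σ, Finset.sum_const, Finset.card_univ,
        Fintype.card_perm, Fintype.card_fin, nsmul_eq_mul]
    have hs : ∀ l : Fin j, ∑ σ : Equiv.Perm (Fin j),
        G q (Equiv.Perm.decomposeFin.symm (Fin.succ l, σ))
        = -((Nat.factorial j : ℝ) *
            ((if q l = m' then (1:ℝ) else 0) * (fe q * fe (Function.update q l m)))) := by
      intro l
      rw [Finset.sum_congr rfl fun σ _ => succterm q l σ, Finset.sum_const, Finset.card_univ,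
        Fintype.card_perm, Fintype.card_fin, nsmul_eq_mul]
      ring
    rw [h0, Finset.sum_congr rfl fun l _ => hs l, Finset.sum_neg_distrib, ← Finset.mul_sum]
    ring
  rw [Finset.sum_congr rfl fun q _ => split q]
  simp only [Finset.sum_sub_distrib, ← Finset.mul_sum]
  rw [Finset.sum_comm]
  ring

lemma update_sum {n j' : ℕ} (fe : (Fin (j'+1) → Fin n) → ℝ) (hfe : IsAlt fe) (m m' : Fin n) :
    ∑ l : Fin (j'+1), ∑ q : Fin (j'+1) → Fin n,
      (if q l = m' then (1:ℝ) else 0) * (fe q * fe (Function.update q l m))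
    = ((j' + 1 : ℕ) : ℝ) *
        ∑ w : Fin j' → Fin n, fe (Fin.cons m' w) * fe (Fin.cons m w) := by
  classical
  have hupdate : ∀ (x : Fin n) (w : Fin j' → Fin n),
      Function.update (Fin.cons x w : Fin (j'+1) → Fin n) 0 m = Fin.cons m w := by
    intro x w
    funext i
    refine Fin.cases ?_ (fun i => ?_) i
    · rw [Function.update_self, Fin.cons_zero]
    · rw [Function.update_of_ne (Fin.succ_ne_zero i), Fin.cons_succ, Fin.cons_succ]
  have W0 : ∑ q : Fin (j'+1) → Fin n,
      (if q 0 = m' then (1:ℝ) else 0) * (fe q * fe (Function.update q 0 m))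
      = ∑ w : Fin j' → Fin n, fe (Fin.cons m' w) * fe (Fin.cons m w) := by
    rw [← Fintype.sum_equiv (Fin.consEquiv (fun _ : Fin (j'+1) => Fin n))
      (fun p => (if (Fin.cons p.1 p.2 : Fin (j'+1) → Fin n) 0 = m' then (1:ℝ) else 0) *
        (fe (Fin.cons p.1 p.2) * fe (Function.update (Fin.cons p.1 p.2 : Fin (j'+1) → Fin n) 0 m)))
      (fun q => (if q 0 = m' then (1:ℝ) else 0) * (fe q * fe (Function.update q 0 m)))
      (fun p => rfl), Fintype.sum_prod_type]
    have key : ∀ x : Fin n, ∀ w : Fin j' → Fin n,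
        (if (Fin.cons x w : Fin (j'+1) → Fin n) 0 = m' then (1:ℝ) else 0) *
          (fe (Fin.cons x w) * fe (Function.update (Fin.cons x w : Fin (j'+1) → Fin n) 0 m))
        = if x = m' then fe (Fin.cons x w) * fe (Fin.cons m w) else 0 := by
      intro x w
      rw [hupdate, Fin.cons_zero, ite_mul, one_mul, zero_mul]
    rw [Finset.sum_congr rfl fun x _ => Finset.sum_congr rfl fun w _ => key x w,
      Finset.sum_comm]
    refine Finset.sum_congr rfl fun w _ => ?_
    rw [Finset.sum_ite_eq' Finset.univ m' (fun x => fe (Fin.cons x w) * fe (Fin.cons m w)),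
      if_pos (Finset.mem_univ m')]
  have Wl : ∀ l : Fin (j'+1),
      ∑ q : Fin (j'+1) → Fin n,
        (if q l = m' then (1:ℝ) else 0) * (fe q * fe (Function.update q l m))
      = ∑ q : Fin (j'+1) → Fin n,
        (if q 0 = m' then (1:ℝ) else 0) * (fe q * fe (Function.update q 0 m)) := by
    intro l
    set s := Equiv.swap (0 : Fin (j'+1)) l with hs
    have hinv : Function.Involutive (fun q : Fin (j'+1) → Fin n => q ∘ ⇑s) := by
      intro q
      funext x
      simp [hs, Equiv.swap_apply_self]
    refine (Fintype.sum_bijective _ hinv.bijective _ _ fun q => ?_).symm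
    have h1 : (q ∘ ⇑s) l = q 0 := by
      simp [hs, Equiv.swap_apply_right]
    have h2 : fe (q ∘ ⇑s) = ((Equiv.Perm.sign s : ℤ):ℝ) * fe q := hfe s q
    have h3 : Function.update (q ∘ ⇑s) l m = (Function.update q 0 m) ∘ ⇑s := by
      funext w
      rcases eq_or_ne w l with rfl | hw
      · rw [Function.update_self, Function.comp_apply, hs, Equiv.swap_apply_right,
          Function.update_self]
      · rw [Function.update_of_ne hw, Function.comp_apply, Function.comp_apply,
          Function.update_of_ne]
        intro hc
        apply hw
        apply s.injective
        rw [hc, hs, Equiv.swap_apply_right]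
    rw [h1, h2, h3, hfe s (Function.update q 0 m)]
    rcases Int.units_eq_one_or (Equiv.Perm.sign s) with h5 | h5 <;> rw [h5] <;> push_cast <;> ring
  rw [Finset.sum_congr rfl fun l _ => Wl l, Finset.sum_const, Finset.card_univ,
    Fintype.card_fin, nsmul_eq_mul, W0]

lemma all_bij_count (N : ℕ) :
    ∑ p : Fin N → Fin N, (if Function.Bijective p then (1:ℝ) else 0)
      = (Nat.factorial N : ℝ) := by
  classical
  rw [Finset.sum_boole]
  have h1 : (Finset.univ.filter fun p : Fin N → Fin N => Function.Bijective p).card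
      = Fintype.card {p : Fin N → Fin N // Function.Bijective p} :=
    (Fintype.card_subtype _).symm
  rw [h1, Fintype.card_congr (bijSubtypeEquiv (Fin N) (Fin N)),
    Fintype.card_equiv (Equiv.refl (Fin N)), Fintype.card_fin]

lemma alt_eq_levi {N : ℕ} (fe : (Fin N → Fin N) → ℝ) (hfe : IsAlt fe)
    (a : Fin N → Fin N) : fe a = leviCivita a * fe (fun i => i) := by
  by_cases hb : Function.Bijective a
  · have : fe ((fun i => i) ∘ ⇑(Equiv.ofBijective a hb))
        = ((Equiv.Perm.sign (Equiv.ofBijective a hb) : ℤ):ℝ) * fe (fun i => i) :=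
      hfe (Equiv.ofBijective a hb) (fun i => i)
    rw [leviCivita, dif_pos hb]
    have ha : (fun i => i) ∘ ⇑(Equiv.ofBijective a hb) = a := rfl
    rw [ha] at this
    exact this
  · have hni : ¬ Function.Injective a := by
      intro hc
      exact hb (Finite.injective_iff_bijective.mp hc)
    rw [hfe.eq_zero_of_not_inj hni, leviCivita_of_not_bij hb, zero_mul]

lemma cons_eq_append {N' : ℕ} (m : Fin (N'+1)) (p : Fin N' → Fin (N'+1))
    (hn : 1 + N' = N' + 1) :
    (fun x => Fin.append (fun _ : Fin 1 => m) p (Fin.cast hn.symm x))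
      = Fin.cons m p := by
  funext x
  rw [Fin.append_left_eq_cons]
  exact congrArg (Fin.cons m p) (Fin.ext (by simp))

lemma topform {N : ℕ} (fe : (Fin N → Fin N) → ℝ) (hfe : IsAlt fe) (m m' : Fin N) :
    formDot fe m m' = (if m = m' then (1:ℝ) else 0) * formSq fe := by
  classical
  cases N with
  | zero => exact m.elim0
  | succ N' =>
    have hn : 1 + N' = N' + 1 := by omega
    set c := fe (fun i => i) with hc
    have hSq : formSq fe = c * c := by
      rw [formSq]
      have : ∀ a : Fin (N'+1) → Fin (N'+1), fe a * fe a
          = (leviCivita a * leviCivita a) * (c * c) := by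
        intro a
        rw [alt_eq_levi fe hfe a]
        ring
      rw [Finset.sum_congr rfl fun a _ => this a]
      have : ∑ a : Fin (N'+1) → Fin (N'+1), (leviCivita a * leviCivita a) * (c * c)
          = (∑ a : Fin (N'+1) → Fin (N'+1), (if Function.Bijective a then (1:ℝ) else 0)) * (c * c) := by
        rw [Finset.sum_mul]
        exact Finset.sum_congr rfl fun a _ => by rw [leviCivita_mul_self]
      rw [this, all_bij_count]
      have : (Nat.factorial (N'+1) : ℝ) ≠ 0 := Nat.cast_ne_zero.mpr (Nat.factorial_ne_zero _)
      field_simp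
    have hDot : formDot fe m m' = (1 / (Nat.factorial N' : ℝ)) *
        ∑ p : Fin N' → Fin (N'+1), fe (Fin.cons m p) * fe (Fin.cons m' p) := rfl
    rw [hDot, hSq]
    have hfe' : ∀ p : Fin N' → Fin (N'+1), fe (Fin.cons m p) * fe (Fin.cons m' p)
        = (leviCivita (fun x => Fin.append (fun _ : Fin 1 => m) p (Fin.cast hn.symm x)) *
            leviCivita (fun x => Fin.append (fun _ : Fin 1 => m') p (Fin.cast hn.symm x))) * (c * c) := by
      intro p
      rw [← cons_eq_append m p hn, ← cons_eq_append m' p hn]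
      rw [alt_eq_levi fe hfe (fun x => Fin.append (fun _ : Fin 1 => m) p (Fin.cast hn.symm x)),
        alt_eq_levi fe hfe (fun x => Fin.append (fun _ : Fin 1 => m') p (Fin.cast hn.symm x)),
        ← hc]
      ring
    rw [Finset.sum_congr rfl fun p _ => hfe' p]
    rw [show ∀ S : Finset (Fin N' → Fin (N'+1)), ∀ f : (Fin N' → Fin (N'+1)) → ℝ,
      ∑ p ∈ S, f p * (c * c) = (∑ p ∈ S, f p) * (c * c) from fun S f => (Finset.sum_mul ..).symm]
    rw [levi_contraction hn (fun _ : Fin 1 => m) (fun _ : Fin 1 => m')]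
    have huniq : ∀ τ : Equiv.Perm (Fin 1), τ = 1 := fun τ => Equiv.ext fun x => Subsingleton.elim _ _
    have hperm : ∑ τ : Equiv.Perm (Fin 1), ((Equiv.Perm.sign τ : ℤ):ℝ) *
        ∏ i : Fin 1, (if (fun _ : Fin 1 => m) i = (fun _ : Fin 1 => m') (τ i) then (1:ℝ) else 0)
        = (if m = m' then (1:ℝ) else 0) := by
      rw [Finset.sum_eq_single 1]
      · simp
      · intro τ _ hτ
        exact absurd (huniq τ) hτ
      · intro hc'
        exact absurd (Finset.mem_univ _) hc'
    rw [hperm]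
    have hfac : (Nat.factorial N' : ℝ) ≠ 0 := Nat.cast_ne_zero.mpr (Nat.factorial_ne_zero _)
    field_simp

lemma snoc_eq_cons_rot {n j : ℕ} (q : Fin j → Fin n) (mm : Fin n) :
    (Fin.snoc q mm : Fin (j+1) → Fin n)
      = (Fin.cons mm q : Fin (j+1) → Fin n) ∘ ⇑(finRotate (j+1)) := by
  funext i
  refine Fin.lastCases ?_ (fun w => ?_) i
  · rw [Fin.snoc_last, Function.comp_apply, finRotate_last, Fin.cons_zero]
  · rw [Fin.snoc_castSucc, Function.comp_apply, finRotate_succ_apply, Fin.coeSucc_eq_succ,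
      Fin.cons_succ]

lemma star_dot {n j : ℕ} (h : j ≤ n) (fe : (Fin j → Fin n) → ℝ) (hfe : IsAlt fe)
    (m m' : Fin n) :
    formDot (hodgeStar h fe) m m'
      = (if m = m' then (1:ℝ) else 0) * formSq fe - formDot fe m m' := by
  classical
  by_cases hnj : n = j
  · subst hnj
    rw [formDot_zero_eq (by omega) (hodgeStar h fe), topform fe hfe m m']
    ring
  · obtain ⟨u', hu⟩ : ∃ u', n - j = u' + 1 := ⟨n - j - 1, by omega⟩
    have hn2 : (j+1) + u' = n := by omega
    set sgn : ℝ := ((Equiv.Perm.sign (finRotate (j+1)) : ℤ):ℝ) with hsgndef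
    have hsgn : sgn * sgn = 1 := sign_real_mul_self _
    set A : Fin n → (Fin j → Fin n) → (Fin u' → Fin n) → ℝ := fun mm q p =>
      leviCivita (fun x => Fin.append (Fin.cons mm q) p (Fin.cast hn2.symm x)) with hA
    have keyfun : ∀ (mm : Fin n) (p : Fin u' → Fin n) (q : Fin j → Fin n),
        (Fin.append q (Fin.cons mm p ∘ Fin.cast hu) ∘ Fin.cast (Nat.add_sub_cancel' h).symm)
          = fun x => Fin.append ((Fin.cons mm q : Fin (j+1) → Fin n) ∘ ⇑(finRotate (j+1))) p
              (Fin.cast hn2.symm x) := by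
      intro mm p q
      funext x
      rw [Function.comp_apply, Fin.append_cast_right q (Fin.cons mm p) _ hu,
        Function.comp_apply, Fin.append_right_cons, Function.comp_apply, snoc_eq_cons_rot]
      exact congrArg _ (Fin.ext (by simp))
    have hstar : ∀ (mm : Fin n) (p : Fin u' → Fin n),
        hodgeStar h fe (Fin.cons mm p ∘ Fin.cast hu)
        = (1 / (Nat.factorial j : ℝ)) * ∑ q : Fin j → Fin n, (A mm q p * sgn) * fe q := by
      intro mm p
      simp only [hodgeStar]
      refine congrArg _ (Finset.sum_congr rfl fun q _ => ?_)
      rw [keyfun mm p q, leviCivita_append_comp hn2 (Fin.cons mm q) p (finRotate (j+1)), hA,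
        hsgndef]
    have main : ∀ p : Fin u' → Fin n,
        (hodgeStar h fe (Fin.cons m p ∘ Fin.cast hu)) *
          (hodgeStar h fe (Fin.cons m' p ∘ Fin.cast hu))
        = (1/(Nat.factorial j:ℝ) * (1/(Nat.factorial j:ℝ))) *
            ∑ q : Fin j → Fin n, ∑ q' : Fin j → Fin n,
              (fe q * fe q') * (A m q p * A m' q' p) := by
      intro p
      rw [hstar m p, hstar m' p, mul_mul_mul_comm, Finset.sum_mul_sum]
      refine congrArg _ (Finset.sum_congr rfl fun q _ => Finset.sum_congr rfl fun q' _ => ?_)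
      linear_combination (fe q * fe q' * A m q p * A m' q' p) * hsgn
    rw [formDot_succ_eq hu (hodgeStar h fe) m m',
      Finset.sum_congr rfl fun p _ => main p]
    have swap1 : ∑ p : Fin u' → Fin n,
        (1/(Nat.factorial j:ℝ) * (1/(Nat.factorial j:ℝ))) *
          ∑ q : Fin j → Fin n, ∑ q' : Fin j → Fin n, (fe q * fe q') * (A m q p * A m' q' p)
        = (1/(Nat.factorial j:ℝ) * (1/(Nat.factorial j:ℝ))) *
            ∑ q : Fin j → Fin n, ∑ q' : Fin j → Fin n,
              (fe q * fe q') * ∑ p : Fin u' → Fin n, (A m q p * A m' q' p) := by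
      rw [← Finset.mul_sum]
      refine congrArg _ ?_
      rw [Finset.sum_comm]
      refine Finset.sum_congr rfl fun q _ => ?_
      rw [Finset.sum_comm]
      refine Finset.sum_congr rfl fun q' _ => ?_
      rw [Finset.mul_sum]
    rw [swap1]
    have contraction : ∀ (q q' : Fin j → Fin n),
        ∑ p : Fin u' → Fin n, (A m q p * A m' q' p)
        = (Nat.factorial u' : ℝ) *
            ∑ τ : Equiv.Perm (Fin (j+1)), ((Equiv.Perm.sign τ : ℤ):ℝ) *
              ∏ i : Fin (j+1), (if (Fin.cons m q : Fin (j+1) → Fin n) i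
                = (Fin.cons m' q' : Fin (j+1) → Fin n) (τ i) then (1:ℝ) else 0) := by
      intro q q'
      exact levi_contraction hn2 (Fin.cons m q) (Fin.cons m' q')
    rw [Finset.sum_congr rfl fun q _ => Finset.sum_congr rfl fun q' _ => by
      rw [contraction q q']]
    have pull : ∑ q : Fin j → Fin n, ∑ q' : Fin j → Fin n,
        (fe q * fe q') * ((Nat.factorial u' : ℝ) *
          ∑ τ : Equiv.Perm (Fin (j+1)), ((Equiv.Perm.sign τ : ℤ):ℝ) *
            ∏ i : Fin (j+1), (if (Fin.cons m q : Fin (j+1) → Fin n) i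
              = (Fin.cons m' q' : Fin (j+1) → Fin n) (τ i) then (1:ℝ) else 0))
        = (Nat.factorial u' : ℝ) * ∑ q : Fin j → Fin n, ∑ q' : Fin j → Fin n,
            fe q * fe q' *
              ∑ τ : Equiv.Perm (Fin (j+1)), ((Equiv.Perm.sign τ : ℤ):ℝ) *
                ∏ i : Fin (j+1), (if (Fin.cons m q : Fin (j+1) → Fin n) i
                  = (Fin.cons m' q' : Fin (j+1) → Fin n) (τ i) then (1:ℝ) else 0) := by
      rw [Finset.mul_sum]
      refine Finset.sum_congr rfl fun q _ => ?_
      rw [Finset.mul_sum]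
      exact Finset.sum_congr rfl fun q' _ => by ring
    rw [pull, tau_sum_core fe hfe m m']
    have hfacj : (Nat.factorial j : ℝ) ≠ 0 := Nat.cast_ne_zero.mpr (Nat.factorial_ne_zero _)
    have hfacu : (Nat.factorial u' : ℝ) ≠ 0 := Nat.cast_ne_zero.mpr (Nat.factorial_ne_zero _)
    have collapse : (1/(Nat.factorial u' : ℝ)) *
        ((1/(Nat.factorial j:ℝ) * (1/(Nat.factorial j:ℝ))) *
          ((Nat.factorial u' : ℝ) * ((Nat.factorial j : ℝ) *
            ((if m = m' then (1:ℝ) else 0) * (∑ q : Fin j → Fin n, fe q * fe q)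
              - ∑ l : Fin j, ∑ q : Fin j → Fin n,
                  (if q l = m' then (1:ℝ) else 0) * (fe q * fe (Function.update q l m))))))
        = (if m = m' then (1:ℝ) else 0) *
            ((1/(Nat.factorial j:ℝ)) * ∑ q : Fin j → Fin n, fe q * fe q)
          - (1/(Nat.factorial j:ℝ)) * ∑ l : Fin j, ∑ q : Fin j → Fin n,
              (if q l = m' then (1:ℝ) else 0) * (fe q * fe (Function.update q l m)) := by
      generalize (if m = m' then (1:ℝ) else 0) = D
      generalize (∑ q : Fin j → Fin n, fe q * fe q) = S1
      generalize (∑ l : Fin j, ∑ q : Fin j → Fin n,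
        (if q l = m' then (1:ℝ) else 0) * (fe q * fe (Function.update q l m))) = S2
      field_simp
    rw [collapse]
    have hformSq : formSq fe
        = (1/(Nat.factorial j:ℝ)) * ∑ q : Fin j → Fin n, fe q * fe q := rfl
    rw [← hformSq]
    have hlast : (1/(Nat.factorial j:ℝ)) * ∑ l : Fin j, ∑ q : Fin j → Fin n,
        (if q l = m' then (1:ℝ) else 0) * (fe q * fe (Function.update q l m))
        = formDot fe m m' := by
      cases j with
      | zero => simp [formDot]
      | succ j'' =>
        rw [update_sum fe hfe m m']
        have hformDot : formDot fe m m' = (1 / (Nat.factorial j'' : ℝ)) *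
            ∑ w : Fin j'' → Fin n, fe (Fin.cons m w) * fe (Fin.cons m' w) := rfl
        rw [hformDot]
        have hfac'' : (Nat.factorial j'' : ℝ) ≠ 0 := Nat.cast_ne_zero.mpr (Nat.factorial_ne_zero _)
        have hfacsucc : (Nat.factorial (j''+1) : ℝ)
            = ((j'' + 1 : ℕ) : ℝ) * (Nat.factorial j'' : ℝ) := by
          rw [Nat.factorial_succ]
          push_cast
          ring
        rw [hfacsucc]
        rw [Finset.sum_congr rfl fun w _ => mul_comm (fe (Fin.cons m' w)) (fe (Fin.cons m w))]
        field_simp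
    rw [hlast]

lemma formDot_psd {n k : ℕ} (G : (Fin k → Fin n) → ℝ) (X : Fin n → ℝ) :
    0 ≤ ∑ m : Fin n, ∑ m' : Fin n, X m * X m' * formDot G m m' := by
  classical
  cases k with
  | zero =>
    have h0 : ∀ m m' : Fin n, formDot G m m' = 0 := fun m m' => rfl
    simp [h0]
  | succ j =>
    have step : ∀ m m' : Fin n, X m * X m' * formDot G m m'
        = (1/(Nat.factorial j : ℝ)) * ∑ p : Fin j → Fin n,
            (X m * G (Fin.cons m p)) * (X m' * G (Fin.cons m' p)) := by
      intro m m'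
      have hdot : formDot G m m' = (1/(Nat.factorial j : ℝ)) *
          ∑ p : Fin j → Fin n, G (Fin.cons m p) * G (Fin.cons m' p) := rfl
      rw [hdot, Finset.mul_sum, Finset.mul_sum, Finset.mul_sum]
      exact Finset.sum_congr rfl fun p _ => by ring
    calc ∑ m : Fin n, ∑ m' : Fin n, X m * X m' * formDot G m m'
        = ∑ m : Fin n, ∑ m' : Fin n, (1/(Nat.factorial j : ℝ)) *
            ∑ p : Fin j → Fin n, (X m * G (Fin.cons m p)) * (X m' * G (Fin.cons m' p)) :=
          Finset.sum_congr rfl fun m _ => Finset.sum_congr rfl fun m' _ => step m m'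
      _ = (1/(Nat.factorial j : ℝ)) * ∑ m : Fin n, ∑ m' : Fin n,
            ∑ p : Fin j → Fin n, (X m * G (Fin.cons m p)) * (X m' * G (Fin.cons m' p)) := by
          rw [Finset.mul_sum]
          exact Finset.sum_congr rfl fun m _ => (Finset.mul_sum ..).symm
      _ = (1/(Nat.factorial j : ℝ)) * ∑ p : Fin j → Fin n, ∑ m : Fin n, ∑ m' : Fin n,
            (X m * G (Fin.cons m p)) * (X m' * G (Fin.cons m' p)) := by
          refine congrArg _ ?_
          have h1 : ∀ m : Fin n, ∑ m' : Fin n, ∑ p : Fin j → Fin n,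
              (X m * G (Fin.cons m p)) * (X m' * G (Fin.cons m' p))
              = ∑ p : Fin j → Fin n, ∑ m' : Fin n,
                  (X m * G (Fin.cons m p)) * (X m' * G (Fin.cons m' p)) :=
            fun m => Finset.sum_comm
          rw [Finset.sum_congr rfl fun m _ => h1 m]
          exact Finset.sum_comm
      _ = (1/(Nat.factorial j : ℝ)) * ∑ p : Fin j → Fin n,
            (∑ m : Fin n, X m * G (Fin.cons m p)) * (∑ m : Fin n, X m * G (Fin.cons m p)) := by
          refine congrArg _ (Finset.sum_congr rfl fun p _ => ?_)
          rw [Finset.sum_mul_sum]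
      _ ≥ 0 := by
          apply mul_nonneg (by positivity)
          exact Finset.sum_nonneg fun p _ => mul_self_nonneg _

/-- for a `k`-form `f_i` and a `(k−d)`-form `f_e` on an oriented
`n`-dimensional inner product space (components in an orthonormal frame, `g_{mn} = δ_{mn}`),
the tensor `(f_i)_m·(f_i)_n − (f_e)_m·(f_e)_n + g_{mn} f_e²` equals
`(f_i)_m·(f_i)_n + (⋆f_e)_m·(⋆f_e)_n` and is therefore positive semidefinite. -/
theorem combStress_eq_and_posSemidef {n k d : ℕ} (hd : 1 ≤ d) (hdk : d ≤ k)
    (h : k - d ≤ n)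
    (fi : (Fin k → Fin n) → ℝ) (fe : (Fin (k - d) → Fin n) → ℝ)
    (hfi : IsAlt fi) (hfe : IsAlt fe) :
    (∀ m m' : Fin n,
      formDot fi m m' - formDot fe m m' + (if m = m' then (1 : ℝ) else 0) * formSq fe
        = formDot fi m m' + formDot (hodgeStar h fe) m m')
    ∧ ∀ X : Fin n → ℝ,
        0 ≤ ∑ m : Fin n, ∑ m' : Fin n, X m * X m' *
          (formDot fi m m' - formDot fe m m'
            + (if m = m' then (1 : ℝ) else 0) * formSq fe) := by
  have hstar := star_dot h fe hfe
  constructor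
  · intro m m'
    rw [hstar m m']
    ring
  · intro X
    have hre : ∀ m m' : Fin n, formDot fi m m' - formDot fe m m'
        + (if m = m' then (1:ℝ) else 0) * formSq fe
        = formDot fi m m' + formDot (hodgeStar h fe) m m' := by
      intro m m'
      rw [hstar m m']
      ring
    rw [Finset.sum_congr rfl fun m _ => Finset.sum_congr rfl fun m' _ => by rw [hre m m']]
    have split : ∑ m : Fin n, ∑ m' : Fin n, X m * X m' *
        (formDot fi m m' + formDot (hodgeStar h fe) m m')
        = (∑ m : Fin n, ∑ m' : Fin n, X m * X m' * formDot fi m m')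
          + (∑ m : Fin n, ∑ m' : Fin n, X m * X m' * formDot (hodgeStar h fe) m m') := by
      rw [← Finset.sum_add_distrib]
      refine Finset.sum_congr rfl fun m _ => ?_
      rw [← Finset.sum_add_distrib]
      exact Finset.sum_congr rfl fun m' _ => by ring
    rw [split]
    exact add_nonneg (formDot_psd fi X) (formDot_psd (hodgeStar h fe) X)
end
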